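/- arXiv:0811.0751 — 2 statements merged into one kernel-verified Lean document; each statement's English description precedes it below -/
import Mathlib

section
/- Let M be a Garside monoid with group of fractions G. The quasi-centralizer QZ(G) = {g in G : gM = Mg} is a finitely generated free abelian group, freely generated by the distinct elements among {τ_s : s an atom of M}. -/
/-- Left-divisibility in a monoid. -/
def LeftDvd {M : Type*} [Monoid M] (a b : M) : Prop := ∃ c, b = a * c

/-- Right-divisibility in a monoid. -/
def MonRightDvd {M : Type*} [Monoid M] (a b : M) : Prop := ∃ c, b = c * a

/-- An element `g` of a monoid is quasi-central if `gM = Mg` as sets. -/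
def QuasiCentral {M : Type*} [Monoid M] (g : M) : Prop :=
  ∀ x : M, (∃ m, x = g * m) ↔ (∃ m, x = m * g)

/-- An atom of a monoid: a non-identity element that is not a product of two
non-identity elements. -/
def MonAtom {M : Type*} [Monoid M] (a : M) : Prop :=
  a ≠ 1 ∧ ∀ b c : M, a = b * c → b = 1 ∨ c = 1

/-- A Garside-monoid structure on a monoid `M`: `M` is cancellative, noetherian
for the factor relation, its left- and right-divisibility orders are lattices,
and it has a quasi-central Garside element `Δ` whose powers are left-divisible
by every element. -/
structure GarsideStruct (M : Type*) [Monoid M] where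
  cancel_left : ∀ a b c : M, a * b = a * c → b = c
  cancel_right : ∀ a b c : M, b * a = c * a → b = c
  wf : WellFounded (fun w w' : M => (∃ w1 w2, w' = w1 * w * w2) ∧ w ≠ w')
  lcmL : M → M → M
  lcmL_left : ∀ a b, LeftDvd a (lcmL a b)
  lcmL_right : ∀ a b, LeftDvd b (lcmL a b)
  lcmL_min : ∀ a b k, LeftDvd a k → LeftDvd b k → LeftDvd (lcmL a b) k
  gcdL : M → M → M
  gcdL_left : ∀ a b, LeftDvd (gcdL a b) a
  gcdL_right : ∀ a b, LeftDvd (gcdL a b) b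
  gcdL_max : ∀ a b k, LeftDvd k a → LeftDvd k b → LeftDvd k (gcdL a b)
  lcmR : M → M → M
  lcmR_left : ∀ a b, MonRightDvd a (lcmR a b)
  lcmR_right : ∀ a b, MonRightDvd b (lcmR a b)
  lcmR_min : ∀ a b k, MonRightDvd a k → MonRightDvd b k → MonRightDvd (lcmR a b) k
  gcdR : M → M → M
  gcdR_left : ∀ a b, MonRightDvd (gcdR a b) a
  gcdR_right : ∀ a b, MonRightDvd (gcdR a b) b
  gcdR_max : ∀ a b k, MonRightDvd k a → MonRightDvd k b → MonRightDvd k (gcdR a b)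
  delta : M
  delta_qc : QuasiCentral delta
  delta_pow : ∀ g : M, ∃ n : ℕ, LeftDvd g (delta ^ n)

set_option linter.unusedSectionVars false
namespace Stmt9

variable {M : Type*} [Monoid M]

theorem ldvd_refl (a : M) : LeftDvd a a := ⟨1, (mul_one a).symm⟩

theorem ldvd_trans {a b c : M} (h1 : LeftDvd a b) (h2 : LeftDvd b c) : LeftDvd a c := by
  obtain ⟨x, rfl⟩ := h1; obtain ⟨y, rfl⟩ := h2; exact ⟨x * y, by rw [mul_assoc]⟩

theorem ldvd_mul (a b : M) : LeftDvd a (a * b) := ⟨b, rfl⟩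

theorem no_descent (GS : GarsideStruct M) (F : ℕ → M)
    (h : ∀ i, (∃ w1 w2, F i = w1 * F (i + 1) * w2) ∧ F (i + 1) ≠ F i) : False := by
  have hne : (Set.range F).Nonempty := ⟨F 0, 0, rfl⟩
  obtain ⟨k, hk⟩ := GS.wf.min_mem (Set.range F) hne
  exact GS.wf.not_lt_min (Set.range F) (Set.mem_range_self (k + 1))
    (by rw [← hk]; exact h k)

theorem no_self_factor (GS : GarsideStruct M) {x u v : M} (h : x = u * x * v) :
    u = 1 ∧ v = 1 := by
  have hu : u = 1 := by
    by_contra hu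
    have key : ∀ i : ℕ, x * v ^ i = u * (x * v ^ (i + 1)) := by
      intro i
      rw [pow_succ', ← mul_assoc x v (v ^ i), ← mul_assoc u (x * v) (v ^ i),
        ← mul_assoc u x v, ← h]
    refine no_descent GS (fun i => x * v ^ i) (fun i => ⟨⟨u, 1, ?_⟩, ?_⟩)
    · show x * v ^ i = u * (x * v ^ (i + 1)) * 1
      rw [mul_one]; exact key i
    · show x * v ^ (i + 1) ≠ x * v ^ i
      intro he
      have : u * (x * v ^ (i + 1)) = 1 * (x * v ^ (i + 1)) := by
        rw [one_mul]; conv_rhs => rw [he]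
        exact (key i).symm
      exact hu (GS.cancel_right _ _ _ this)
  refine ⟨hu, GS.cancel_left x v 1 ?_⟩
  rw [mul_one]; conv_rhs => rw [h, hu, one_mul]

theorem mul_eq_one_both (GS : GarsideStruct M) {u v : M} (h : u * v = 1) : u = 1 ∧ v = 1 :=
  no_self_factor GS (x := 1) (by rw [mul_one]; exact h.symm)

theorem ldvd_one (GS : GarsideStruct M) {a : M} (h : LeftDvd a 1) : a = 1 := by
  obtain ⟨c, hc⟩ := h; exact (mul_eq_one_both GS hc.symm).1

theorem ldvd_antisymm (GS : GarsideStruct M) {a b : M} (h1 : LeftDvd a b) (h2 : LeftDvd b a) :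
    a = b := by
  obtain ⟨x, hx⟩ := h1; obtain ⟨y, hy⟩ := h2
  have : x * y = 1 := by
    apply GS.cancel_left a; rw [mul_one, ← mul_assoc, ← hx, ← hy]
  rw [hx, (mul_eq_one_both GS this).1, mul_one]

theorem exists_atom_ldvd (GS : GarsideStruct M) {g : M} (hg : g ≠ 1) :
    ∃ s, MonAtom s ∧ LeftDvd s g := by
  induction g using WellFounded.induction GS.wf with
  | _ g ih =>
    by_cases ha : MonAtom g
    · exact ⟨g, ha, ldvd_refl g⟩
    · rw [MonAtom] at ha
      push_neg at ha
      obtain ⟨b, c, hbc, hb, hc⟩ := ha hg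
      obtain ⟨s, hs, hsb⟩ := ih b ⟨⟨1, c, by rw [one_mul, ← hbc]⟩,
        fun he => hc (GS.cancel_left b c 1 (by rw [mul_one, ← hbc, he]))⟩ hb
      exact ⟨s, hs, ldvd_trans hsb ⟨c, hbc⟩⟩

/-! ### Conjugation by a quasi-central element -/

noncomputable def sig (g : M) (hg : QuasiCentral g) (m : M) : M :=
  ((hg (m * g)).mpr ⟨m, rfl⟩).choose

theorem sig_spec (g : M) (hg : QuasiCentral g) (m : M) : m * g = g * sig g hg m :=
  ((hg (m * g)).mpr ⟨m, rfl⟩).choose_spec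

noncomputable def rho (g : M) (hg : QuasiCentral g) (m : M) : M :=
  ((hg (g * m)).mp ⟨m, rfl⟩).choose

theorem rho_spec (g : M) (hg : QuasiCentral g) (m : M) : g * m = rho g hg m * g :=
  ((hg (g * m)).mp ⟨m, rfl⟩).choose_spec

variable (GS : GarsideStruct M)
include GS

theorem sig_eq {g : M} (hg : QuasiCentral g) {m x : M} (h : m * g = g * x) :
    sig g hg m = x :=
  GS.cancel_left g _ _ (by rw [← sig_spec g hg m, h])

theorem rho_eq {g : M} (hg : QuasiCentral g) {m x : M} (h : g * m = x * g) :
    rho g hg m = x :=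
  GS.cancel_right g _ _ (by rw [← rho_spec g hg m, h])

theorem sig_mul {g : M} (hg : QuasiCentral g) (m m' : M) :
    sig g hg (m * m') = sig g hg m * sig g hg m' := by
  apply sig_eq GS hg
  rw [mul_assoc, sig_spec g hg m', ← mul_assoc, sig_spec g hg m, mul_assoc]

theorem rho_mul {g : M} (hg : QuasiCentral g) (m m' : M) :
    rho g hg (m * m') = rho g hg m * rho g hg m' := by
  apply rho_eq GS hg
  rw [← mul_assoc, rho_spec g hg m, mul_assoc, rho_spec g hg m', ← mul_assoc]

theorem sig_one {g : M} (hg : QuasiCentral g) : sig g hg 1 = 1 :=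
  sig_eq GS hg (by rw [one_mul, mul_one])

theorem rho_one {g : M} (hg : QuasiCentral g) : rho g hg 1 = 1 :=
  rho_eq GS hg (by rw [one_mul, mul_one])

theorem rho_sig {g : M} (hg : QuasiCentral g) (m : M) : rho g hg (sig g hg m) = m :=
  rho_eq GS hg (sig_spec g hg m).symm

theorem sig_rho {g : M} (hg : QuasiCentral g) (m : M) : sig g hg (rho g hg m) = m :=
  sig_eq GS hg (rho_spec g hg m).symm

theorem sig_self {g : M} (hg : QuasiCentral g) : sig g hg g = g := sig_eq GS hg rfl

theorem sig_eq_one {g : M} (hg : QuasiCentral g) {m : M} (h : sig g hg m = 1) : m = 1 := by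
  have := sig_spec g hg m
  rw [h, mul_one] at this
  exact GS.cancel_right g m 1 (by rw [this, one_mul])

theorem rho_eq_one {g : M} (hg : QuasiCentral g) {m : M} (h : rho g hg m = 1) : m = 1 := by
  have := rho_spec g hg m
  rw [h, one_mul] at this
  exact GS.cancel_left g m 1 (by rw [this, mul_one])

theorem sig_ldvd {g : M} (hg : QuasiCentral g) {a b : M} (h : LeftDvd a b) :
    LeftDvd (sig g hg a) (sig g hg b) := by
  obtain ⟨c, rfl⟩ := h
  exact ⟨sig g hg c, by rw [sig_mul GS]⟩

theorem rho_ldvd {g : M} (hg : QuasiCentral g) {a b : M} (h : LeftDvd a b) :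
    LeftDvd (rho g hg a) (rho g hg b) := by
  obtain ⟨c, rfl⟩ := h
  exact ⟨rho g hg c, by rw [rho_mul GS]⟩

theorem sig_atom {g : M} (hg : QuasiCentral g) {m : M} (h : MonAtom m) :
    MonAtom (sig g hg m) := by
  constructor
  · intro he
    exact h.1 (sig_eq_one GS hg he)
  · intro b c hbc
    have hm : m = rho g hg b * rho g hg c := by
      rw [← rho_mul GS, ← hbc, rho_sig GS]
    rcases h.2 _ _ hm with h1 | h1
    · left; rw [← sig_rho GS hg b, h1, sig_one GS hg]
    · right; rw [← sig_rho GS hg c, h1, sig_one GS hg]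

theorem sig_qc {g : M} (hg : QuasiCentral g) {m : M} (hm : QuasiCentral m) :
    QuasiCentral (sig g hg m) := by
  intro x
  constructor
  · rintro ⟨k, rfl⟩
    obtain ⟨k2, hk2⟩ := (hm (m * rho g hg k)).mp ⟨rho g hg k, rfl⟩
    refine ⟨sig g hg k2, ?_⟩
    have : sig g hg (m * rho g hg k) = sig g hg (k2 * m) := by rw [hk2]
    rw [sig_mul GS, sig_mul GS, sig_rho GS] at this
    exact this
  · rintro ⟨k, rfl⟩
    obtain ⟨k2, hk2⟩ := (hm (rho g hg k * m)).mpr ⟨rho g hg k, rfl⟩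
    refine ⟨sig g hg k2, ?_⟩
    have : sig g hg (rho g hg k * m) = sig g hg (m * k2) := by rw [hk2]
    rw [sig_mul GS, sig_mul GS, sig_rho GS] at this
    exact this

theorem rho_qc {g : M} (hg : QuasiCentral g) {m : M} (hm : QuasiCentral m) :
    QuasiCentral (rho g hg m) := by
  intro x
  constructor
  · rintro ⟨k, rfl⟩
    obtain ⟨k2, hk2⟩ := (hm (m * sig g hg k)).mp ⟨sig g hg k, rfl⟩
    refine ⟨rho g hg k2, ?_⟩
    have : rho g hg (m * sig g hg k) = rho g hg (k2 * m) := by rw [hk2]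
    rw [rho_mul GS, rho_mul GS, rho_sig GS] at this
    exact this
  · rintro ⟨k, rfl⟩
    obtain ⟨k2, hk2⟩ := (hm (sig g hg k * m)).mpr ⟨sig g hg k, rfl⟩
    refine ⟨rho g hg k2, ?_⟩
    have : rho g hg (sig g hg k * m) = rho g hg (m * k2) := by rw [hk2]
    rw [rho_mul GS, rho_mul GS, rho_sig GS] at this
    exact this

/-! ### Quasi-central elements: closure properties -/

omit GS in
theorem qc_one : QuasiCentral (1 : M) := by
  intro x; constructor
  · rintro ⟨m, rfl⟩; exact ⟨m, by rw [one_mul, mul_one]⟩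
  · rintro ⟨m, rfl⟩; exact ⟨m, by rw [one_mul, mul_one]⟩

omit GS in
theorem qc_mul {a b : M} (ha : QuasiCentral a) (hb : QuasiCentral b) :
    QuasiCentral (a * b) := by
  intro x; constructor
  · rintro ⟨m, rfl⟩
    obtain ⟨m1, hm1⟩ := (hb (b * m)).mp ⟨m, rfl⟩
    obtain ⟨m2, hm2⟩ := (ha (a * m1)).mp ⟨m1, rfl⟩
    exact ⟨m2, by rw [mul_assoc, hm1, ← mul_assoc, hm2, mul_assoc]⟩
  · rintro ⟨m, rfl⟩
    obtain ⟨m1, hm1⟩ := (ha (m * a)).mpr ⟨m, rfl⟩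
    obtain ⟨m2, hm2⟩ := (hb (m1 * b)).mpr ⟨m1, rfl⟩
    exact ⟨m2, by rw [← mul_assoc, hm1, mul_assoc, hm2, ← mul_assoc]⟩

omit GS in
theorem qc_pow {a : M} (ha : QuasiCentral a) (n : ℕ) : QuasiCentral (a ^ n) := by
  induction n with
  | zero => simpa using qc_one (M := M)
  | succ k ih => rw [pow_succ]; exact qc_mul ih ha

/-- If `g = a * b` with `g` and `a` quasi-central, then `b` is quasi-central. -/
theorem qc_strip {a b : M} (hg : QuasiCentral (a * b)) (ha : QuasiCentral a) :
    QuasiCentral b := by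
  intro x; constructor
  · rintro ⟨m, rfl⟩
    obtain ⟨m1, hm1⟩ := (hg ((a * b) * m)).mp ⟨m, rfl⟩
    obtain ⟨m2, hm2⟩ := (ha (m1 * a)).mpr ⟨m1, rfl⟩
    refine ⟨m2, GS.cancel_left a _ _ ?_⟩
    calc a * (b * m) = (a * b) * m := by rw [mul_assoc]
      _ = m1 * (a * b) := hm1
      _ = (m1 * a) * b := by rw [mul_assoc]
      _ = (a * m2) * b := by rw [hm2]
      _ = a * (m2 * b) := by rw [mul_assoc]
  · rintro ⟨m, rfl⟩
    obtain ⟨m1, hm1⟩ := (ha (a * m)).mp ⟨m, rfl⟩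
    obtain ⟨m2, hm2⟩ := (hg (m1 * (a * b))).mpr ⟨m1, rfl⟩
    refine ⟨m2, GS.cancel_left a _ _ ?_⟩
    calc a * (m * b) = (a * m) * b := by rw [mul_assoc]
      _ = (m1 * a) * b := by rw [hm1]
      _ = m1 * (a * b) := by rw [mul_assoc]
      _ = (a * b) * m2 := hm2
      _ = a * (b * m2) := by rw [mul_assoc]

/-! ### The minimal quasi-central elements τ -/

section Tau

variable (tau : M → M) (htqc : ∀ g, QuasiCentral (tau g))
  (htdvd : ∀ g, LeftDvd g (tau g))
  (htmin : ∀ g h, QuasiCentral h → LeftDvd g h → LeftDvd (tau g) h)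

include htdvd in
theorem tau_ne_one {s : M} (hs : MonAtom s) : tau s ≠ 1 := by
  intro he
  obtain ⟨c, hc⟩ := htdvd s
  rw [he] at hc
  exact hs.1 (mul_eq_one_both GS hc.symm).1

/-- Key lemma: if an atom `x` divides `h * c` with `h` quasi-central and
`x` does not divide `h`, then `σ_h(x)` divides `c`. -/
theorem key_dvd {h c x : M} (hh : QuasiCentral h) (hx : MonAtom x)
    (hdvd : LeftDvd x (h * c)) (hnd : ¬LeftDvd x h) : LeftDvd (sig h hh x) c := by
  have hl : LeftDvd (GS.lcmL x h) (x * h) :=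
    GS.lcmL_min x h (x * h) (ldvd_mul x h) ⟨sig h hh x, sig_spec h hh x⟩
  obtain ⟨c₁, hc₁⟩ := GS.lcmL_right x h
  obtain ⟨z, hz⟩ := hl
  have hsig : sig h hh x = c₁ * z := by
    apply GS.cancel_left h
    rw [← sig_spec h hh x, hz, hc₁, mul_assoc]
  rcases (sig_atom GS hh hx).2 c₁ z hsig with h1 | h1
  · exfalso
    apply hnd
    have : GS.lcmL x h = h := by rw [hc₁, h1, mul_one]
    exact this ▸ GS.lcmL_left x h
  · have hlcm : GS.lcmL x h = h * sig h hh x := by rw [hc₁, hsig, h1, mul_one]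
    obtain ⟨w, hw⟩ := GS.lcmL_min x h (h * c) hdvd (ldvd_mul h c)
    rw [hlcm, mul_assoc] at hw
    exact ⟨w, GS.cancel_left h _ _ hw⟩

include htqc htdvd htmin in
theorem sig_tau {g : M} (hg : QuasiCentral g) (m : M) :
    sig g hg (tau m) = tau (sig g hg m) := by
  have h1 : LeftDvd (tau (sig g hg m)) (sig g hg (tau m)) :=
    htmin _ _ (sig_qc GS hg (htqc m)) (sig_ldvd GS hg (htdvd m))
  have h2 : LeftDvd (tau m) (rho g hg (tau (sig g hg m))) := by
    apply htmin _ _ (rho_qc GS hg (htqc _))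
    have := rho_ldvd GS hg (htdvd (sig g hg m))
    rwa [rho_sig GS hg] at this
  have h3 : LeftDvd (sig g hg (tau m)) (tau (sig g hg m)) := by
    have := sig_ldvd GS hg h2
    rwa [sig_rho GS hg] at this
  exact ldvd_antisymm GS h3 h1

include htqc htdvd htmin in
theorem tau_qzatom {s p q : M} (hs : MonAtom s) (hp : QuasiCentral p)
    (hq : QuasiCentral q) (he : tau s = p * q) : p = 1 ∨ q = 1 := by
  by_contra hcon
  push_neg at hcon
  obtain ⟨hp1, hq1⟩ := hcon
  have hsp : ¬LeftDvd s p := by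
    intro hd
    obtain ⟨y, hy⟩ := htmin s p hp hd
    have : (1 : M) = y * q := by
      apply GS.cancel_left (tau s)
      rw [mul_one]
      conv_lhs => rw [he, hy, mul_assoc]
    exact hq1 (mul_eq_one_both GS this.symm).2
  have hsd : LeftDvd s (p * q) := he ▸ htdvd s
  obtain ⟨q₂, hq₂⟩ := htmin _ q hq (key_dvd GS hp hs hsd hsp)
  have hq₂qc : QuasiCentral q₂ := qc_strip GS (hq₂ ▸ hq) (htqc _)
  have base : tau s = p * sig p hp (tau s) * q₂ := by
    rw [sig_tau GS tau htqc htdvd htmin hp s, he, hq₂, ← mul_assoc]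
  set σ := sig p hp with hσ
  have iter_mul : ∀ (i : ℕ) (x y : M), σ^[i] (x * y) = σ^[i] x * σ^[i] y := by
    intro i
    induction i with
    | zero => intro x y; simp
    | succ k ih =>
      intro x y
      rw [Function.iterate_succ_apply, Function.iterate_succ_apply,
        Function.iterate_succ_apply, hσ, sig_mul GS, ih]
  have iter_p : ∀ i : ℕ, σ^[i] p = p := by
    intro i
    induction i with
    | zero => simp
    | succ k ih => rw [Function.iterate_succ_apply, hσ, sig_self GS, ih]
  have hF : ∀ i : ℕ, σ^[i] (tau s) = p * σ^[i + 1] (tau s) * σ^[i] q₂ := by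
    intro i
    conv_lhs => rw [base]
    rw [iter_mul, iter_mul, iter_p, Function.iterate_succ_apply]
  apply no_descent GS (fun i => σ^[i] (tau s))
  intro i
  constructor
  · exact ⟨p, σ^[i] q₂, hF i⟩
  · intro he2
    have : σ^[i] (tau s) = p * σ^[i] (tau s) * σ^[i] q₂ := by
      conv_lhs => rw [hF i]
      rw [he2]
    exact hp1 (no_self_factor GS this).1

include htqc htdvd htmin in
theorem tau_eq_of_ldvd {u s : M} (hu : MonAtom u) (hs : MonAtom s)
    (hd : LeftDvd (tau u) (tau s)) : tau u = tau s := by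
  obtain ⟨r, hr⟩ := hd
  have hrqc : QuasiCentral r := qc_strip GS (hr ▸ htqc s) (htqc u)
  rcases tau_qzatom GS tau htqc htdvd htmin hs (htqc u) hrqc hr with h | h
  · exact absurd h (tau_ne_one GS tau htdvd hu)
  · rw [hr, h, mul_one]

theorem lcm_qc {a b : M} (ha : QuasiCentral a) (hb : QuasiCentral b) :
    QuasiCentral (GS.lcmL a b) := by
  obtain ⟨as, has⟩ := GS.lcmL_left a b
  obtain ⟨bs, hbs⟩ := GS.lcmL_right a b
  obtain ⟨a2, ha2⟩ := GS.lcmR_left a b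
  obtain ⟨b2, hb2⟩ := GS.lcmR_right a b
  have hMl : ∀ m, ∃ z, m * GS.lcmL a b = GS.lcmL a b * z := by
    intro m
    have h1 : LeftDvd a (m * GS.lcmL a b) := by
      refine ⟨sig a ha m * as, ?_⟩
      rw [has, ← mul_assoc, ← mul_assoc, ← sig_spec a ha m]
    have h2 : LeftDvd b (m * GS.lcmL a b) := by
      refine ⟨sig b hb m * bs, ?_⟩
      rw [hbs, ← mul_assoc, ← mul_assoc, ← sig_spec b hb m]
    exact GS.lcmL_min a b _ h1 h2
  have hl2M : ∀ m, ∃ z, GS.lcmR a b * m = z * GS.lcmR a b := by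
    intro m
    have h1 : MonRightDvd a (GS.lcmR a b * m) := by
      refine ⟨a2 * rho a ha m, ?_⟩
      rw [ha2, mul_assoc, mul_assoc, ← rho_spec a ha m]
    have h2 : MonRightDvd b (GS.lcmR a b * m) := by
      refine ⟨b2 * rho b hb m, ?_⟩
      rw [hb2, mul_assoc, mul_assoc, ← rho_spec b hb m]
    exact GS.lcmR_min a b _ h1 h2
  have hll2 : GS.lcmL a b = GS.lcmR a b := by
    have h1 : MonRightDvd a (GS.lcmL a b) := by
      obtain ⟨w, hw⟩ := (ha (a * as)).mp ⟨as, rfl⟩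
      exact ⟨w, by rw [has, hw]⟩
    have h2 : MonRightDvd b (GS.lcmL a b) := by
      obtain ⟨w, hw⟩ := (hb (b * bs)).mp ⟨bs, rfl⟩
      exact ⟨w, by rw [hbs, hw]⟩
    obtain ⟨u, hu⟩ := GS.lcmR_min a b _ h1 h2
    have h3 : LeftDvd a (GS.lcmR a b) := ⟨sig a ha a2, by rw [ha2, sig_spec a ha a2]⟩
    have h4 : LeftDvd b (GS.lcmR a b) := ⟨sig b hb b2, by rw [hb2, sig_spec b hb b2]⟩
    obtain ⟨v, hv⟩ := GS.lcmL_min a b _ h3 h4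
    have hself : GS.lcmL a b = u * GS.lcmL a b * v := by
      conv_lhs => rw [hu, hv]
      rw [mul_assoc]
    obtain ⟨hu1, _⟩ := no_self_factor GS hself
    rw [hu, hu1, one_mul]
  intro x
  constructor
  · rintro ⟨m, rfl⟩
    obtain ⟨z, hz⟩ := hl2M m
    exact ⟨z, by rw [hll2]; exact hz⟩
  · rintro ⟨m, rfl⟩
    exact hMl m

include htqc htdvd htmin in
theorem tau_lcm {s t : M} (hs : MonAtom s) (ht : MonAtom t) (hne : tau s ≠ tau t) :
    GS.lcmL (tau s) (tau t) = tau t * tau s := by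
  have hlqc : QuasiCentral (GS.lcmL (tau s) (tau t)) := lcm_qc GS (htqc s) (htqc t)
  obtain ⟨a', ha'⟩ := GS.lcmL_left (tau s) (tau t)
  have ha'qc : QuasiCentral a' := qc_strip GS (ha' ▸ hlqc) (htqc s)
  have hts : ¬LeftDvd t (tau s) := by
    intro hd
    exact hne (tau_eq_of_ldvd GS tau htqc htdvd htmin ht hs
      (htmin t (tau s) (htqc s) hd)).symm
  have htl : LeftDvd t (tau s * a') := by
    rw [← ha']
    exact ldvd_trans (htdvd t) (GS.lcmL_right (tau s) (tau t))
  obtain ⟨a₂, ha₂⟩ := htmin _ a' ha'qc (key_dvd GS (htqc s) ht htl hts)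
  have hcomm : tau t * tau s = tau s * tau (sig (tau s) (htqc s) t) := by
    rw [← sig_tau GS tau htqc htdvd htmin (htqc s) t, ← sig_spec (tau s) (htqc s) (tau t)]
  have hld : LeftDvd (GS.lcmL (tau s) (tau t)) (tau t * tau s) :=
    GS.lcmL_min _ _ _ ⟨tau (sig (tau s) (htqc s) t), hcomm⟩ (ldvd_mul _ _)
  obtain ⟨z, hz⟩ := hld
  have hbig : tau s * tau (sig (tau s) (htqc s) t) * (a₂ * z)
      = tau s * tau (sig (tau s) (htqc s) t) * 1 := by
    calc tau s * tau (sig (tau s) (htqc s) t) * (a₂ * z)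
        = tau s * tau (sig (tau s) (htqc s) t) * a₂ * z := (mul_assoc _ a₂ z).symm
      _ = tau s * (tau (sig (tau s) (htqc s) t) * a₂) * z := by rw [mul_assoc (tau s)]
      _ = GS.lcmL (tau s) (tau t) * z := by rw [← ha₂, ← ha']
      _ = tau t * tau s := hz.symm
      _ = tau s * tau (sig (tau s) (htqc s) t) * 1 := by rw [mul_one, hcomm]
  have ha₂1 : a₂ * z = 1 := GS.cancel_left _ _ _ hbig
  have ha₂e : a₂ = 1 := (mul_eq_one_both GS ha₂1).1
  rw [ha', ha₂, ha₂e, mul_one, hcomm]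

include htqc htdvd htmin in
theorem tau_comm {s t : M} (hs : MonAtom s) (ht : MonAtom t) :
    tau s * tau t = tau t * tau s := by
  by_cases hne : tau s = tau t
  · rw [hne]
  · have h1 := tau_lcm GS tau htqc htdvd htmin hs ht hne
    have h2 := tau_lcm GS tau htqc htdvd htmin ht hs (Ne.symm hne)
    have : GS.lcmL (tau s) (tau t) = GS.lcmL (tau t) (tau s) := by
      apply ldvd_antisymm GS
      · exact GS.lcmL_min _ _ _ (GS.lcmL_right _ _) (GS.lcmL_left _ _)
      · exact GS.lcmL_min _ _ _ (GS.lcmL_right _ _) (GS.lcmL_left _ _)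
    rw [h1, h2] at this
    exact this.symm

include htqc htdvd htmin in
theorem tau_dvd_cancel {s t Y : M} (hs : MonAtom s) (ht : MonAtom t)
    (hne : tau s ≠ tau t) (hd : LeftDvd (tau s) (tau t * Y)) : LeftDvd (tau s) Y := by
  have hlcm := tau_lcm GS tau htqc htdvd htmin hs ht hne
  obtain ⟨w, hw⟩ := GS.lcmL_min (tau s) (tau t) (tau t * Y) hd (ldvd_mul _ _)
  rw [hlcm, mul_assoc] at hw
  exact ⟨w, GS.cancel_left (tau t) _ _ hw⟩

include htqc htdvd htmin in
theorem qc_gen {g : M} (hg : QuasiCentral g) :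
    ∃ L : List M, (∀ x ∈ L, ∃ s, MonAtom s ∧ x = tau s) ∧ g = L.prod := by
  induction g using WellFounded.induction GS.wf with
  | _ g ih =>
    by_cases hg1 : g = 1
    · exact ⟨[], by simp, by simp [hg1]⟩
    · obtain ⟨s, hs, hsd⟩ := exists_atom_ldvd GS hg1
      obtain ⟨g₁, hg₁⟩ := htmin s g hg hsd
      have hg₁qc : QuasiCentral g₁ := qc_strip GS (hg₁ ▸ hg) (htqc s)
      have hne : g₁ ≠ g := by
        intro he
        rw [he] at hg₁
        apply tau_ne_one GS tau htdvd hs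
        exact GS.cancel_right g (tau s) 1 (by rw [one_mul]; exact hg₁.symm)
      obtain ⟨L, hL, hLp⟩ := ih g₁ ⟨⟨tau s, 1, by rw [mul_one, ← hg₁]⟩, hne⟩ hg₁qc
      exact ⟨tau s :: L, by
        intro x hx
        rcases List.mem_cons.mp hx with h | h
        · exact ⟨s, hs, h⟩
        · exact hL x h, by rw [List.prod_cons, ← hLp, ← hg₁]⟩

end Tau

/-! ### Products over commuting families -/

section CommProd

omit [Monoid M] GS in
theorem prodE_zero {N : Type*} [Monoid N] {k : ℕ} (c : Fin k → N) :
    (List.ofFn fun i => c i ^ (0 : ℕ)).prod = 1 := by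
  apply List.prod_eq_one
  intro x hx
  rw [List.mem_ofFn] at hx
  obtain ⟨i, rfl⟩ := hx
  exact pow_zero _

omit [Monoid M] GS in
theorem prodE_pull {N : Type*} [Monoid N] : ∀ {k : ℕ} (c : Fin k → N),
    (∀ i j, c i * c j = c j * c i) → ∀ (e : Fin k → ℕ) (j : Fin k), e j ≠ 0 →
    (List.ofFn fun i => c i ^ e i).prod
      = c j * (List.ofFn fun i => c i ^ (if i = j then e i - 1 else e i)).prod := by
  intro k
  induction k with
  | zero => intro c _ e j; exact j.elim0
  | succ m ih =>
    intro c hc e j hj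
    rw [List.ofFn_succ, List.ofFn_succ, List.prod_cons, List.prod_cons]
    rcases Fin.eq_zero_or_eq_succ j with rfl | ⟨j', rfl⟩
    · have h1 : ∀ i : Fin m, (if i.succ = (0 : Fin (m + 1)) then e i.succ - 1 else e i.succ)
          = e i.succ := fun i => if_neg (Fin.succ_ne_zero i)
      have h0 : (if (0 : Fin (m + 1)) = 0 then e 0 - 1 else e 0) = e 0 - 1 := if_pos rfl
      simp only [h0, h1, if_true]
      have h2 : c 0 ^ e 0 = c 0 * c 0 ^ (e 0 - 1) := by
        conv_lhs => rw [show e 0 = (e 0 - 1) + 1 by omega]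
        rw [pow_succ']
      rw [h2, mul_assoc]
    · have h0 : (if (0 : Fin (m + 1)) = j'.succ then e 0 - 1 else e 0) = e 0 :=
        if_neg (Fin.succ_ne_zero j').symm
      have h2 : ∀ i : Fin m, (if i.succ = j'.succ then e i.succ - 1 else e i.succ)
          = (if i = j' then e i.succ - 1 else e i.succ) := by
        intro i
        by_cases h : i = j'
        · rw [if_pos h, if_pos (by rw [h])]
        · rw [if_neg h, if_neg (fun hh => h (Fin.succ_injective _ hh))]
      simp only [h0, h2]
      rw [ih (fun i => c i.succ) (fun i j => hc i.succ j.succ) (fun i => e i.succ) j' hj]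
      have hcomm : c 0 ^ e 0 * c j'.succ = c j'.succ * c 0 ^ e 0 :=
        ((show Commute (c j'.succ) (c 0) from hc j'.succ 0).pow_right (e 0)).eq.symm
      rw [← mul_assoc, ← mul_assoc, hcomm]

omit [Monoid M] GS in
theorem prodZ_add {N : Type*} [Group N] : ∀ {k : ℕ} (c : Fin k → N),
    (∀ i j, c i * c j = c j * c i) → ∀ f g : Fin k → ℤ,
    (List.ofFn fun i => c i ^ (f i + g i)).prod
      = (List.ofFn fun i => c i ^ f i).prod * (List.ofFn fun i => c i ^ g i).prod := by
  intro k
  induction k with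
  | zero => intro c _ f g; simp
  | succ m ih =>
    intro c hc f g
    rw [List.ofFn_succ, List.ofFn_succ, List.ofFn_succ, List.prod_cons, List.prod_cons,
      List.prod_cons, zpow_add,
      ih (fun i => c i.succ) (fun i j => hc i.succ j.succ) (fun i => f i.succ)
        (fun i => g i.succ)]
    have hcomm : Commute ((List.ofFn fun i : Fin m => c i.succ ^ f i.succ).prod)
        (c 0 ^ g 0) := by
      apply Commute.list_prod_left
      intro x hx
      rw [List.mem_ofFn] at hx
      obtain ⟨i, rfl⟩ := hx
      exact (show Commute (c i.succ) (c 0) from hc i.succ 0).zpow_zpow _ _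
    calc c 0 ^ f 0 * c 0 ^ g 0 *
          ((List.ofFn fun i : Fin m => c i.succ ^ f i.succ).prod *
            (List.ofFn fun i : Fin m => c i.succ ^ g i.succ).prod)
        = c 0 ^ f 0 * (c 0 ^ g 0 * (List.ofFn fun i : Fin m => c i.succ ^ f i.succ).prod) *
            (List.ofFn fun i : Fin m => c i.succ ^ g i.succ).prod := by
          rw [mul_assoc, mul_assoc, mul_assoc]
      _ = c 0 ^ f 0 * ((List.ofFn fun i : Fin m => c i.succ ^ f i.succ).prod * c 0 ^ g 0) *
            (List.ofFn fun i : Fin m => c i.succ ^ g i.succ).prod := by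
          rw [hcomm.eq]
      _ = c 0 ^ f 0 * (List.ofFn fun i : Fin m => c i.succ ^ f i.succ).prod *
            (c 0 ^ g 0 * (List.ofFn fun i : Fin m => c i.succ ^ g i.succ).prod) := by
          rw [mul_assoc, mul_assoc, mul_assoc]

end CommProd

/-! ### Unique factorization over the family t -/

section Uniq

variable {n : ℕ} (t : Fin n → M)

omit GS in
theorem prodE_eq_one (e : Fin n → ℕ) (he : ∀ i, e i = 0) :
    (List.ofFn fun i => t i ^ e i).prod = 1 := by
  apply List.prod_eq_one
  intro x hx
  rw [List.mem_ofFn] at hx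
  obtain ⟨i, rfl⟩ := hx
  show t i ^ e i = 1
  rw [he i, pow_zero]

variable (hne1 : ∀ i, t i ≠ 1)
  (hcomm : ∀ i j, t i * t j = t j * t i)
  (hcancel : ∀ i j Y, i ≠ j → LeftDvd (t i) (t j * Y) → LeftDvd (t i) Y)

include GS hne1 hcomm hcancel in
theorem prodE_nodvd : ∀ (g : M) (e : Fin n → ℕ) (j : Fin n),
    (List.ofFn fun i => t i ^ e i).prod = g → e j = 0 → ¬LeftDvd (t j) g := by
  intro g
  induction g using WellFounded.induction GS.wf with
  | _ g ihg =>
    intro e j hprod hej hdvd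
    by_cases hz : ∀ i, e i = 0
    · rw [prodE_eq_one t e hz] at hprod
      exact hne1 j (ldvd_one GS (hprod ▸ hdvd))
    · push_neg at hz
      obtain ⟨k, hk⟩ := hz
      have hkj : j ≠ k := fun h => hk (h ▸ hej)
      have hp := prodE_pull t hcomm e k hk
      rw [hprod] at hp
      set e' : Fin n → ℕ := fun i => if i = k then e i - 1 else e i with he'
      have hgfact : g = t k * (List.ofFn fun i => t i ^ e' i).prod := hp
      have hsmaller : (List.ofFn fun i => t i ^ e' i).prod ≠ g := by
        intro hh
        apply hne1 k
        apply GS.cancel_right g (t k) 1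
        rw [one_mul]
        conv_rhs => rw [hgfact, hh]
      have hdvd' : LeftDvd (t j) ((List.ofFn fun i => t i ^ e' i).prod) := by
        apply hcancel j k _ hkj
        rw [← hgfact]
        exact hdvd
      exact ihg _ ⟨⟨t k, 1, by rw [mul_one]; exact hgfact⟩, hsmaller⟩ e' j rfl
        (by rw [he']; simp only [if_neg hkj]; exact hej) hdvd'

include GS hne1 hcomm hcancel in
theorem prodE_uniq : ∀ (g : M) (e e' : Fin n → ℕ),
    (List.ofFn fun i => t i ^ e i).prod = g →
    (List.ofFn fun i => t i ^ e' i).prod = g → e = e' := by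
  intro g
  induction g using WellFounded.induction GS.wf with
  | _ g ihg =>
    intro e e' hprod hprod'
    by_cases hz : ∀ i, e i = 0
    · funext j
      rw [hz j]
      by_contra hej
      have : e' j ≠ 0 := fun h => hej (by rw [h])
      have hp := prodE_pull t hcomm e' j this
      rw [hprod'] at hp
      rw [prodE_eq_one t e hz] at hprod
      rw [← hprod] at hp
      exact hne1 j (mul_eq_one_both GS hp.symm).1
    · push_neg at hz
      obtain ⟨k, hk⟩ := hz
      have hp := prodE_pull t hcomm e k hk
      rw [hprod] at hp
      have hk' : e' k ≠ 0 := by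
        intro h0
        exact prodE_nodvd GS t hne1 hcomm hcancel g e' k hprod' h0
          ⟨(List.ofFn fun i => t i ^ (if i = k then e i - 1 else e i)).prod, hp⟩
      have hp' := prodE_pull t hcomm e' k hk'
      rw [hprod'] at hp'
      have hcanc : (List.ofFn fun i => t i ^ (if i = k then e i - 1 else e i)).prod
          = (List.ofFn fun i => t i ^ (if i = k then e' i - 1 else e' i)).prod :=
        GS.cancel_left (t k) _ _ (by rw [← hp, ← hp'])
      have hsm : (List.ofFn fun i => t i ^ (if i = k then e i - 1 else e i)).prod ≠ g := by
        intro hh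
        apply hne1 k
        apply GS.cancel_right g (t k) 1
        rw [one_mul]
        conv_rhs => rw [hp, hh]
      have heq := ihg _ ⟨⟨t k, 1, by rw [mul_one]; exact hp⟩, hsm⟩
        (fun i => if i = k then e i - 1 else e i)
        (fun i => if i = k then e' i - 1 else e' i) rfl hcanc.symm
      funext j
      have := congrFun heq j
      by_cases hjk : j = k
      · subst hjk
        simp at this
        omega
      · simpa only [if_neg hjk] using this

end Uniq

/-! ### The quasi-centralizer condition in the group of fractions -/

section Group

variable {G : Type*} [Group G] (φ : M →* G)

def Cond (g : G) : Prop := ∀ x : G, (∃ m : M, x = g * φ m) ↔ (∃ m : M, x = φ m * g)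

omit GS in
theorem cond_phi {a : M} (ha : QuasiCentral a) : Cond φ (φ a) := by
  intro x
  constructor
  · rintro ⟨m, rfl⟩
    obtain ⟨m', hm'⟩ := (ha (a * m)).mp ⟨m, rfl⟩
    exact ⟨m', by rw [← map_mul, hm', map_mul]⟩
  · rintro ⟨m, rfl⟩
    obtain ⟨m', hm'⟩ := (ha (m * a)).mpr ⟨m, rfl⟩
    exact ⟨m', by rw [← map_mul, hm', map_mul]⟩

omit GS in
theorem qc_of_cond {a : M} (hinj : Function.Injective φ) (h : Cond φ (φ a)) :
    QuasiCentral a := by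
  intro x
  constructor
  · rintro ⟨m, rfl⟩
    obtain ⟨m', hm'⟩ := (h (φ a * φ m)).mp ⟨m, rfl⟩
    exact ⟨m', hinj (by rw [map_mul, map_mul, hm'])⟩
  · rintro ⟨m, rfl⟩
    obtain ⟨m', hm'⟩ := (h (φ m * φ a)).mpr ⟨m, rfl⟩
    exact ⟨m', hinj (by rw [map_mul, map_mul, hm'])⟩

omit GS in
theorem cond_mul {g g' : G} (hg : Cond φ g) (hg' : Cond φ g') : Cond φ (g * g') := by
  intro x
  constructor
  · rintro ⟨m, rfl⟩
    obtain ⟨m1, hm1⟩ := (hg' (g' * φ m)).mp ⟨m, rfl⟩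
    obtain ⟨m2, hm2⟩ := (hg (g * φ m1)).mp ⟨m1, rfl⟩
    exact ⟨m2, by rw [mul_assoc, hm1, ← mul_assoc, hm2, mul_assoc]⟩
  · rintro ⟨m, rfl⟩
    obtain ⟨m1, hm1⟩ := (hg (φ m * g)).mpr ⟨m, rfl⟩
    obtain ⟨m2, hm2⟩ := (hg' (φ m1 * g')).mpr ⟨m1, rfl⟩
    exact ⟨m2, by rw [← mul_assoc, hm1, mul_assoc, hm2, ← mul_assoc]⟩

omit GS in
theorem cond_inv {g : G} (hg : Cond φ g) : Cond φ g⁻¹ := by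
  intro x
  constructor
  · rintro ⟨m, rfl⟩
    obtain ⟨m1, hm1⟩ := (hg (φ m * g)).mpr ⟨m, rfl⟩
    refine ⟨m1, ?_⟩
    calc g⁻¹ * φ m = g⁻¹ * (φ m * g) * g⁻¹ := by group
      _ = g⁻¹ * (g * φ m1) * g⁻¹ := by rw [hm1]
      _ = φ m1 * g⁻¹ := by group
  · rintro ⟨m, rfl⟩
    obtain ⟨m1, hm1⟩ := (hg (g * φ m)).mp ⟨m, rfl⟩
    refine ⟨m1, ?_⟩
    calc φ m * g⁻¹ = g⁻¹ * (g * φ m) * g⁻¹ := by group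
      _ = g⁻¹ * (φ m1 * g) * g⁻¹ := by rw [hm1]
      _ = g⁻¹ * φ m1 := by group

omit GS in
theorem cond_one : Cond φ 1 := by
  have := cond_phi φ (qc_one (M := M))
  rwa [map_one] at this

omit GS in
theorem cond_list : ∀ L : List G, (∀ x ∈ L, Cond φ x) → Cond φ L.prod := by
  intro L
  induction L with
  | nil => intro _; simpa using cond_one φ
  | cons x L ih =>
    intro h
    rw [List.prod_cons]
    exact cond_mul φ (h x (by simp)) (ih fun y hy => h y (List.mem_cons_of_mem x hy))

omit GS in
theorem cond_zpow {a : M} (ha : QuasiCentral a) (k : ℤ) : Cond φ (φ a ^ k) := by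
  rcases Int.eq_nat_or_neg k with ⟨m, rfl | rfl⟩
  · rw [zpow_natCast, ← map_pow]
    exact cond_phi φ (qc_pow ha m)
  · rw [zpow_neg, zpow_natCast, ← map_pow]
    exact cond_inv φ (cond_phi φ (qc_pow ha m))

end Group

end Stmt9

/-- the quasi-centralizer `QZ(G) = {g ∈ G : gMg⁻¹ = M}` of the
group of fractions `G` of a Garside monoid `M` (with finitely many atoms) is a
finitely generated free abelian group, freely generated by the distinct
elements among the `τ_s` for `s` an atom of `M`. -/
theorem stmt_9 (M : Type*) [Monoid M] (GS : GarsideStruct M)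
    (G : Type*) [Group G] (φ : M →* G) (hφ : Function.Injective φ)
    (hfrac : ∀ g : G, ∃ a b : M, g = φ a * (φ b)⁻¹)
    (τ : M → M)
    (hτqc : ∀ g, QuasiCentral (τ g))
    (hτdvd : ∀ g, LeftDvd g (τ g))
    (hτmin : ∀ g h, QuasiCentral h → LeftDvd g h → LeftDvd (τ g) h)
    (hfin : {s : M | MonAtom s}.Finite) :
    ∃ (n : ℕ) (b : Fin n → G),
      Function.Injective b ∧
      Set.range b = φ '' (τ '' {s : M | MonAtom s}) ∧
      (∀ i j, b i * b j = b j * b i) ∧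
      ∀ g : G,
        (∀ x : G, (∃ m : M, x = g * φ m) ↔ (∃ m : M, x = φ m * g)) ↔
        ∃! f : Fin n → ℤ, g = (List.ofFn fun i => b i ^ f i).prod := by
  classical
  have hTfin : (τ '' {s : M | MonAtom s}).Finite := hfin.image τ
  haveI fT : Fintype ↥(τ '' {s : M | MonAtom s}) := hTfin.fintype
  set n := Fintype.card ↥(τ '' {s : M | MonAtom s}) with hn
  let eqv : ↥(τ '' {s : M | MonAtom s}) ≃ Fin n := Fintype.equivFin _
  set t : Fin n → M := fun i => ((eqv.symm i : ↥(τ '' {s : M | MonAtom s})) : M) with htdef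
  set b : Fin n → G := fun i => φ (t i) with hbdef
  have ht_mem : ∀ i, t i ∈ τ '' {s : M | MonAtom s} := fun i => (eqv.symm i).2
  have ht_atom : ∀ i, ∃ s, MonAtom s ∧ t i = τ s := by
    intro i; obtain ⟨s, hs, he⟩ := ht_mem i; exact ⟨s, hs, he.symm⟩
  have ht_inj : Function.Injective t := by
    intro i j h
    exact eqv.symm.injective (Subtype.coe_injective h)
  have ht_surj : ∀ x ∈ τ '' {s : M | MonAtom s}, ∃ i, t i = x := by
    intro x hx
    refine ⟨eqv ⟨x, hx⟩, ?_⟩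
    show ((eqv.symm (eqv ⟨x, hx⟩) : ↥(τ '' {s : M | MonAtom s})) : M) = x
    rw [Equiv.symm_apply_apply]
  have ht_qc : ∀ i, QuasiCentral (t i) := by
    intro i; obtain ⟨s, _, he⟩ := ht_atom i; rw [he]; exact hτqc s
  have ht_ne1 : ∀ i, t i ≠ 1 := by
    intro i; obtain ⟨s, hs, he⟩ := ht_atom i; rw [he]
    exact Stmt9.tau_ne_one GS τ hτdvd hs
  have ht_comm : ∀ i j, t i * t j = t j * t i := by
    intro i j
    obtain ⟨s, hs, hes⟩ := ht_atom i; obtain ⟨u, hu, heu⟩ := ht_atom j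
    rw [hes, heu]; exact Stmt9.tau_comm GS τ hτqc hτdvd hτmin hs hu
  have ht_cancel : ∀ i j Y, i ≠ j → LeftDvd (t i) (t j * Y) → LeftDvd (t i) Y := by
    intro i j Y hij hd
    obtain ⟨s, hs, hes⟩ := ht_atom i; obtain ⟨u, hu, heu⟩ := ht_atom j
    have hne : τ s ≠ τ u := by
      intro h; exact hij (ht_inj (by rw [hes, heu, h]))
    rw [hes] at hd ⊢; rw [heu] at hd
    exact Stmt9.tau_dvd_cancel GS τ hτqc hτdvd hτmin hs hu hne hd
  have hbcomm : ∀ i j, b i * b j = b j * b i := by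
    intro i j
    show φ (t i) * φ (t j) = φ (t j) * φ (t i)
    rw [← map_mul, ← map_mul, ht_comm]
  have hlcan : ∀ L : List M, (∀ x ∈ L, ∃ i, t i = x) →
      ∃ e : Fin n → ℕ, L.prod = (List.ofFn fun i => t i ^ e i).prod := by
    intro L
    induction L with
    | nil =>
      exact fun _ => ⟨fun _ => 0,
        by rw [List.prod_nil, Stmt9.prodE_eq_one t _ (fun _ => rfl)]⟩
    | cons x L ih =>
      intro h
      obtain ⟨e, he⟩ := ih (fun y hy => h y (List.mem_cons_of_mem x hy))
      obtain ⟨j, hj⟩ := h x List.mem_cons_self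
      refine ⟨fun i => if i = j then e i + 1 else e i, ?_⟩
      have hp := Stmt9.prodE_pull t ht_comm (fun i => if i = j then e i + 1 else e i) j
        (by simp)
      rw [List.prod_cons, he, ← hj, hp]
      refine congrArg (fun z => t j * z)
        (congrArg List.prod (congrArg List.ofFn (funext fun i => ?_)))
      by_cases hij : i = j
      · simp [hij]
      · simp [hij]
  have hphi_prod : ∀ e : Fin n → ℕ, φ ((List.ofFn fun i => t i ^ e i).prod)
      = (List.ofFn fun i => b i ^ (e i : ℤ)).prod := by
    intro e
    rw [map_list_prod, List.map_ofFn]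
    refine congrArg List.prod (congrArg List.ofFn (funext fun i => ?_))
    show φ (t i ^ e i) = b i ^ (e i : ℤ)
    rw [map_pow, zpow_natCast]
  have huniqZ : ∀ f1 f2 : Fin n → ℤ,
      (List.ofFn fun i => b i ^ f1 i).prod = (List.ofFn fun i => b i ^ f2 i).prod →
      f1 = f2 := by
    intro f1 f2 h12
    set mm : Fin n → ℤ := fun i => ((f1 i).natAbs + (f2 i).natAbs : ℤ) with hmm
    have h1nn : ∀ i, 0 ≤ f1 i + mm i := by
      intro i
      show 0 ≤ f1 i + ((f1 i).natAbs + (f2 i).natAbs : ℤ)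
      omega
    have h2nn : ∀ i, 0 ≤ f2 i + mm i := by
      intro i
      show 0 ≤ f2 i + ((f1 i).natAbs + (f2 i).natAbs : ℤ)
      omega
    have hP : (List.ofFn fun i => b i ^ (f1 i + mm i)).prod
        = (List.ofFn fun i => b i ^ (f2 i + mm i)).prod := by
      rw [Stmt9.prodZ_add b hbcomm f1 mm, Stmt9.prodZ_add b hbcomm f2 mm, h12]
    set e1 : Fin n → ℕ := fun i => (f1 i + mm i).toNat with he1def
    set e2 : Fin n → ℕ := fun i => (f2 i + mm i).toNat with he2def
    have hphieq : φ ((List.ofFn fun i => t i ^ e1 i).prod)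
        = φ ((List.ofFn fun i => t i ^ e2 i).prod) := by
      rw [hphi_prod, hphi_prod]
      calc (List.ofFn fun i => b i ^ ((e1 i : ℤ))).prod
          = (List.ofFn fun i => b i ^ (f1 i + mm i)).prod :=
            congrArg List.prod (congrArg List.ofFn (funext fun i =>
              congrArg (fun z : ℤ => b i ^ z) (Int.toNat_of_nonneg (h1nn i))))
        _ = (List.ofFn fun i => b i ^ (f2 i + mm i)).prod := hP
        _ = (List.ofFn fun i => b i ^ ((e2 i : ℤ))).prod :=
            (congrArg List.prod (congrArg List.ofFn (funext fun i =>
              congrArg (fun z : ℤ => b i ^ z) (Int.toNat_of_nonneg (h2nn i))))).symm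
    have hEE := Stmt9.prodE_uniq GS t ht_ne1 ht_comm ht_cancel
      ((List.ofFn fun i => t i ^ e1 i).prod) e1 e2 rfl (hφ hphieq).symm
    funext i
    have hei : (f1 i + mm i).toNat = (f2 i + mm i).toNat := congrFun hEE i
    have h1 := h1nn i
    have h2 := h2nn i
    omega
  refine ⟨n, b, hφ.comp ht_inj, ?_, hbcomm, ?_⟩
  · ext x
    constructor
    · rintro ⟨i, rfl⟩; exact ⟨t i, ht_mem i, rfl⟩
    · rintro ⟨y, hy, rfl⟩
      obtain ⟨i, hi⟩ := ht_surj y hy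
      exact ⟨i, show φ (t i) = φ y by rw [hi]⟩
  · intro g
    constructor
    · intro hg
      have hgc : Stmt9.Cond φ g := hg
      obtain ⟨a, d, hgad⟩ := hfrac g
      obtain ⟨k, c, hc⟩ := GS.delta_pow d
      have hDqc : QuasiCentral (GS.delta ^ k) := Stmt9.qc_pow GS.delta_qc k
      have hg2 : g = φ (a * c) * (φ (GS.delta ^ k))⁻¹ := by
        rw [hgad, hc, map_mul, map_mul, mul_inv_rev]
        group
      have hphiAC : φ (a * c) = g * φ (GS.delta ^ k) := by
        rw [hg2]; group
      have hCac : Stmt9.Cond φ (φ (a * c)) := by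
        rw [hphiAC]
        exact Stmt9.cond_mul φ hgc (Stmt9.cond_phi φ hDqc)
      have hacqc : QuasiCentral (a * c) := Stmt9.qc_of_cond φ hφ hCac
      obtain ⟨L1, hL1, hL1p⟩ := Stmt9.qc_gen GS τ hτqc hτdvd hτmin hacqc
      obtain ⟨L2, hL2, hL2p⟩ := Stmt9.qc_gen GS τ hτqc hτdvd hτmin hDqc
      obtain ⟨e1, he1⟩ := hlcan L1 (fun x hx => by
        obtain ⟨s, hs, rfl⟩ := hL1 x hx
        exact ht_surj _ ⟨s, hs, rfl⟩)
      obtain ⟨e2, he2⟩ := hlcan L2 (fun x hx => by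
        obtain ⟨s, hs, rfl⟩ := hL2 x hx
        exact ht_surj _ ⟨s, hs, rfl⟩)
      have hg3 : g = φ ((List.ofFn fun i => t i ^ e1 i).prod)
          * (φ ((List.ofFn fun i => t i ^ e2 i).prod))⁻¹ := by
        rw [← he1, ← he2, ← hL1p, ← hL2p]; exact hg2
      rw [hphi_prod, hphi_prod] at hg3
      have hPsplit : (List.ofFn fun i => b i ^ ((e1 i : ℤ))).prod
          = (List.ofFn fun i => b i ^ ((e1 i : ℤ) - e2 i)).prod
            * (List.ofFn fun i => b i ^ ((e2 i : ℤ))).prod := by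
        rw [← Stmt9.prodZ_add b hbcomm (fun i => (e1 i : ℤ) - e2 i) (fun i => (e2 i : ℤ))]
        exact congrArg List.prod (congrArg List.ofFn (funext fun i =>
          congrArg (fun z : ℤ => b i ^ z) (sub_add_cancel (e1 i : ℤ) (e2 i : ℤ)).symm))
      have hPf0 : g = (List.ofFn fun i => b i ^ ((e1 i : ℤ) - e2 i)).prod := by
        rw [hg3, hPsplit]
        group
      exact ⟨fun i => (e1 i : ℤ) - e2 i, hPf0,
        fun y hy => huniqZ y _ (hy.symm.trans hPf0)⟩
    · rintro ⟨f, hf, -⟩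
      intro x
      have hcl : Stmt9.Cond φ g := by
        rw [hf]
        apply Stmt9.cond_list
        intro y hy
        rw [List.mem_ofFn] at hy
        obtain ⟨i, rfl⟩ := hy
        exact Stmt9.cond_zpow φ (ht_qc i) (f i)
      exact hcl x
end

section
/- Let M be a Garside monoid and τ : M → QZ(M) send g to its minimal quasi-central left-multiple τ_g. Then τ is a semilattice homomorphism for the join (lcm for left-divisibility): τ_{g ∨ h} = τ_g ∨ τ_h for all g, h in M. -/
section Aux
variable {M : Type*} [Monoid M]

/-- From well-foundedness: `x = w * x * z` forces `w = 1` and `z = 1`. -/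
theorem GS_sandwich (GS : GarsideStruct M) {x w z : M} (h : x = w * x * z) :
    w = 1 ∧ z = 1 := by
  have hw : w = 1 := by
    by_contra hw
    have hne : x ≠ w * x := by
      intro he
      exact hw (GS.cancel_right x w 1 (by rw [one_mul]; exact he.symm))
    have h1 : (fun a b : M => (∃ w1 w2, b = w1 * a * w2) ∧ a ≠ b) x (w * x) :=
      ⟨⟨w, 1, by rw [mul_one]⟩, hne⟩
    have h2 : (fun a b : M => (∃ w1 w2, b = w1 * a * w2) ∧ a ≠ b) (w * x) x :=
      ⟨⟨1, z, by rw [one_mul]; exact h⟩, hne.symm⟩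
    exact GS.wf.asymmetric x (w * x) h1 h2
  refine ⟨hw, ?_⟩
  subst hw
  rw [one_mul] at h
  exact (GS.cancel_left x z 1 (by rw [mul_one]; exact h.symm))

theorem GS_antisymm (GS : GarsideStruct M) {a b : M} (hab : LeftDvd a b)
    (hba : LeftDvd b a) : a = b := by
  obtain ⟨c, hc⟩ := hab
  obtain ⟨d, hd⟩ := hba
  have h1 : a = 1 * a * (c * d) := by rw [one_mul, ← mul_assoc, ← hc, ← hd]
  have hcd := (GS_sandwich GS h1).2
  have h2 : (1 : M) = c * (1 : M) * d := by rw [mul_one]; exact hcd.symm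
  have hc1 := (GS_sandwich GS h2).1
  rw [hc, hc1, mul_one]

theorem leftDvd_trans {a b c : M} (h1 : LeftDvd a b) (h2 : LeftDvd b c) : LeftDvd a c := by
  obtain ⟨u, hu⟩ := h1; obtain ⟨v, hv⟩ := h2
  exact ⟨u * v, by rw [hv, hu, mul_assoc]⟩

/-- The left lcm of two quasi-central elements is quasi-central. -/
theorem GS_lcm_qc (GS : GarsideStruct M) {a b : M} (ha : QuasiCentral a)
    (hb : QuasiCentral b) : QuasiCentral (GS.lcmL a b) := by
  -- a and b right-divide L
  have haR : MonRightDvd a (GS.lcmL a b) := (ha _).mp (GS.lcmL_left a b)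
  have hbR : MonRightDvd b (GS.lcmL a b) := (hb _).mp (GS.lcmL_right a b)
  -- a and b left-divide R := lcmR a b
  have haL : LeftDvd a (GS.lcmR a b) := (ha _).mpr (GS.lcmR_left a b)
  have hbL : LeftDvd b (GS.lcmR a b) := (hb _).mpr (GS.lcmR_right a b)
  -- L = R
  have hLR : GS.lcmL a b = GS.lcmR a b := by
    obtain ⟨zz, hz⟩ := GS.lcmL_min a b _ haL hbL
    obtain ⟨ww, hw⟩ := GS.lcmR_min a b _ haR hbR
    have hs : GS.lcmL a b = ww * GS.lcmL a b * zz := by rw [mul_assoc, ← hz, ← hw]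
    have h1 := GS_sandwich GS hs
    rw [hw, h1.1, one_mul]
  -- quasi-centrality
  intro x
  constructor
  · rintro ⟨m, rfl⟩
    obtain ⟨u, hu⟩ := GS.lcmL_left a b
    have haX : MonRightDvd a (GS.lcmL a b * m) :=
      (ha _).mp ⟨u * m, by rw [hu, mul_assoc]⟩
    obtain ⟨v, hv⟩ := GS.lcmL_right a b
    have hbX : MonRightDvd b (GS.lcmL a b * m) :=
      (hb _).mp ⟨v * m, by rw [hv, mul_assoc]⟩
    obtain ⟨w, hw⟩ := GS.lcmR_min a b _ haX hbX
    exact ⟨w, by rw [hw, hLR]⟩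
  · rintro ⟨m, rfl⟩
    have haX : LeftDvd a (m * GS.lcmL a b) := by
      obtain ⟨w, hw⟩ := haR
      obtain ⟨m1, hm1⟩ := (ha (m * w * a)).mpr ⟨m * w, rfl⟩
      exact ⟨m1, by rw [hw, ← mul_assoc, hm1]⟩
    have hbX : LeftDvd b (m * GS.lcmL a b) := by
      obtain ⟨w, hw⟩ := hbR
      obtain ⟨m1, hm1⟩ := (hb (m * w * b)).mpr ⟨m * w, rfl⟩
      exact ⟨m1, by rw [hw, ← mul_assoc, hm1]⟩
    exact GS.lcmL_min a b _ haX hbX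

end Aux

/-- in a Garside monoid, the map `τ` sending `g` to its minimal
quasi-central left-multiple is a semilattice homomorphism for the lcm for
left-divisibility: `τ (g ∨ h) = τ g ∨ τ h`. -/
theorem stmt_11 (M : Type*) [Monoid M] (GS : GarsideStruct M)
    (τ : M → M)
    (hτqc : ∀ g, QuasiCentral (τ g))
    (hτdvd : ∀ g, LeftDvd g (τ g))
    (hτmin : ∀ g h, QuasiCentral h → LeftDvd g h → LeftDvd (τ g) h) :
    ∀ g h : M, τ (GS.lcmL g h) = GS.lcmL (τ g) (τ h) := by
  intro g h
  set L := GS.lcmL g h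
  set K := GS.lcmL (τ g) (τ h)
  have hKqc : QuasiCentral K := GS_lcm_qc GS (hτqc g) (hτqc h)
  have hLK : LeftDvd L K :=
    GS.lcmL_min g h K (leftDvd_trans (hτdvd g) (GS.lcmL_left _ _))
      (leftDvd_trans (hτdvd h) (GS.lcmL_right _ _))
  have h1 : LeftDvd (τ L) K := hτmin L K hKqc hLK
  have h2 : LeftDvd K (τ L) :=
    GS.lcmL_min (τ g) (τ h) (τ L)
      (hτmin g (τ L) (hτqc L) (leftDvd_trans (GS.lcmL_left g h) (hτdvd L)))
      (hτmin h (τ L) (hτqc L) (leftDvd_trans (GS.lcmL_right g h) (hτdvd L)))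
  exact GS_antisymm GS h1 h2
end
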